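/- If φ, ψ are commuting endomorphisms of an infinite subshift, then α^+(φψ) ≤ α^+(φ) + α^+(ψ) and α^-(φψ) ≥ α^-(φ) + α^-(ψ). In particular, for an automorphism φ, α^+(φ) + α^+(φ^{-1}) ≥ 0 and α^-(φ) + α^-(φ^{-1}) ≤ 0. -/

import Mathlib

open Filter Topology

/-- The left shift on bi-infinite sequences. -/
def shift {A : Type*} (x : ℤ → A) : ℤ → A := fun n => x (n + 1)

/-- The shift by `k` places (`σ^k`). -/
def zshift {A : Type*} (k : ℤ) (x : ℤ → A) : ℤ → A := fun n => x (n + k)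

/-- A subshift: a closed, shift-invariant subset of `Σ^ℤ`. -/
def IsSubshift {A : Type*} [TopologicalSpace A] (X : Set (ℤ → A)) : Prop :=
  IsClosed X ∧ shift '' X = X

/-- An endomorphism of the subshift `X`: a continuous shift-commuting surjection of `X`. -/
structure IsEndo {A : Type*} [TopologicalSpace A] (X : Set (ℤ → A))
    (φ : (ℤ → A) → (ℤ → A)) : Prop where
  maps : Set.MapsTo φ X X
  surj : Set.SurjOn φ X X
  cont : ContinuousOn φ X
  comm : ∀ x ∈ X, φ (shift x) = shift (φ x)

/-- `S` φ-codes `T`: agreement of two points of `X` on `S` forces agreement of their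
φ-images on `T`. -/
def Codes {A : Type*} (X : Set (ℤ → A)) (φ : (ℤ → A) → (ℤ → A)) (S T : Set ℤ) : Prop :=
  ∀ x ∈ X, ∀ y ∈ X, (∀ i ∈ S, x i = y i) → ∀ j ∈ T, φ x j = φ y j

/-- The set of integers `W` such that `[0,∞)` φⁿ-codes `[W,∞)`; `W⁺(n,φ)` is its
least element. -/
def WplusSet {A : Type*} (X : Set (ℤ → A)) (φ : (ℤ → A) → (ℤ → A)) (n : ℕ) : Set ℤ :=
  {W | Codes X (φ^[n]) (Set.Ici 0) (Set.Ici W)}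

/-- The set of integers `W` such that `(-∞,0]` φⁿ-codes `(-∞,W]`; `W⁻(n,φ)` is its
greatest element. -/
def WminusSet {A : Type*} (X : Set (ℤ → A)) (φ : (ℤ → A) → (ℤ → A)) (n : ℕ) : Set ℤ :=
  {W | Codes X (φ^[n]) (Set.Iic 0) (Set.Iic W)}

/-- A subshift of finite type: defined by a finite set of excluded words. -/
def IsSFT {A : Type*} (X : Set (ℤ → A)) : Prop :=
  ∃ F : Set (List A), F.Finite ∧
    ∀ x : ℤ → A, x ∈ X ↔ ∀ (n : ℤ), ∀ w ∈ F, ∃ i : Fin w.length, x (n + i) ≠ w.get i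


set_option linter.unusedSectionVars false
set_option maxHeartbeats 1000000

section AlphaCompositionAux
variable {A : Type*}
lemma zshift_zero (x : ℤ → A) : zshift 0 x = x := by funext m; simp [zshift]
lemma zshift_zshift (j k : ℤ) (x : ℤ → A) : zshift j (zshift k x) = zshift (k + j) x := by
  funext m; simp only [zshift]; ring_nf
lemma shift_eq (x : ℤ → A) : shift x = zshift 1 x := rfl
lemma zshift_succ (k : ℤ) (x : ℤ → A) : zshift (k+1) x = shift (zshift k x) := by
  funext m; simp only [zshift, shift]; ring_nf
lemma zshift_neg_one_shift (x : ℤ → A) : zshift (-1) (shift x) = x := by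
  funext m; simp only [zshift, shift]; ring_nf
lemma shift_zshift_neg_one (x : ℤ → A) : shift (zshift (-1) x) = x := by
  funext m; simp only [zshift, shift]; ring_nf

variable [Fintype A] [TopologicalSpace A] [DiscreteTopology A] {X : Set (ℤ → A)} {φ ψ : (ℤ → A) → (ℤ → A)}

lemma zshift_mem (hs : shift '' X = X) (k : ℤ) {x : ℤ → A} (hx : x ∈ X) : zshift k x ∈ X := by
  induction k using Int.induction_on with
  | zero => rwa [zshift_zero]
  | succ k ih => rw [zshift_succ, ← hs]; exact ⟨_, ih, rfl⟩
  | pred k ih =>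
    rw [← hs] at ih
    obtain ⟨y, hy, hsy⟩ := ih
    have : y = zshift (-(k:ℤ) - 1) x := by
      have := congrArg (zshift (-1)) hsy
      rw [shift_eq, zshift_zshift, zshift_zshift] at this
      simpa [zshift_zero, show -(k:ℤ) + -1 = -(k:ℤ) - 1 by ring] using this
    rwa [← this]

lemma endo_zshift (hs : shift '' X = X) (hφ : IsEndo X φ) (k : ℤ) :
    ∀ x ∈ X, φ (zshift k x) = zshift k (φ x) := by
  induction k using Int.induction_on with
  | zero => intro x hx; rw [zshift_zero, zshift_zero]
  | succ k ih =>
    intro x hx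
    rw [zshift_succ, hφ.comm _ (zshift_mem hs _ hx), ih x hx, ← zshift_succ]
  | pred k ih =>
    intro x hx
    have h1 : zshift (-(k:ℤ) - 1) x = zshift (-1) (zshift (-(k:ℤ)) x) := by
      rw [zshift_zshift]; congr 1
    have hy : zshift (-1) (zshift (-(k:ℤ)) x) ∈ X := zshift_mem hs _ (zshift_mem hs _ hx)
    have h2 := hφ.comm _ hy
    rw [shift_zshift_neg_one] at h2
    -- h2 : φ (zshift (-k) x) = shift (φ (zshift (-1) (zshift (-k) x)))
    have h3 := congrArg (zshift (-1)) h2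
    rw [ih x hx, zshift_neg_one_shift] at h3
    rw [h1, ← h3, zshift_zshift]
    congr 1

lemma iter_mem (hφ : IsEndo X φ) (n : ℕ) {x : ℤ → A} (hx : x ∈ X) : φ^[n] x ∈ X := by
  induction n with
  | zero => simpa
  | succ n ih => rw [Function.iterate_succ_apply']; exact hφ.maps ih

lemma iter_zshift (hs : shift '' X = X) (hφ : IsEndo X φ) (n : ℕ) (k : ℤ) :
    ∀ x ∈ X, φ^[n] (zshift k x) = zshift k (φ^[n] x) := by
  induction n with
  | zero => intro x hx; simp
  | succ n ih =>
    intro x hx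
    rw [Function.iterate_succ_apply', Function.iterate_succ_apply',
      ih x hx, endo_zshift hs hφ k _ (iter_mem hφ n hx)]

lemma iter_comm (hφ : IsEndo X φ) (hψ : IsEndo X ψ)
    (hcomm : ∀ x ∈ X, φ (ψ x) = ψ (φ x)) (n : ℕ) :
    ∀ x ∈ X, ψ^[n] (φ x) = φ (ψ^[n] x) := by
  induction n with
  | zero => intro x hx; simp
  | succ n ih =>
    intro x hx
    rw [Function.iterate_succ_apply', Function.iterate_succ_apply',
      ih x hx, hcomm _ (iter_mem hψ n hx)]

lemma comp_iter (hφ : IsEndo X φ) (hψ : IsEndo X ψ)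
    (hcomm : ∀ x ∈ X, φ (ψ x) = ψ (φ x)) (n : ℕ) :
    ∀ x ∈ X, (φ ∘ ψ)^[n] x = φ^[n] (ψ^[n] x) := by
  induction n with
  | zero => intro x hx; simp
  | succ n ih =>
    intro x hx
    have hψx : ψ x ∈ X := hψ.maps hx
    have hc : (φ ∘ ψ) x ∈ X := hφ.maps hψx
    rw [Function.iterate_succ_apply, ih _ hc]
    show φ^[n] (ψ^[n] (φ (ψ x))) = φ^[n+1] (ψ^[n+1] x)
    rw [iter_comm hφ hψ hcomm n _ hψx, ← Function.iterate_succ_apply ψ,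
      ← Function.iterate_succ_apply φ]

lemma codes_shift_plus (hs : shift '' X = X) (hφ : IsEndo X φ) {n : ℕ} {W : ℤ}
    (hc : Codes X (φ^[n]) (Set.Ici 0) (Set.Ici W)) (a : ℤ) :
    Codes X (φ^[n]) (Set.Ici a) (Set.Ici (W + a)) := by
  intro x hx y hy hagree j hj
  have hx' : zshift a x ∈ X := zshift_mem hs a hx
  have hy' : zshift a y ∈ X := zshift_mem hs a hy
  have key := hc _ hx' _ hy' (fun i hi => hagree (i + a) (by simp at hi ⊢; omega)) (j - a)
    (by simp at hj ⊢; omega)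
  rw [iter_zshift hs hφ n a x hx, iter_zshift hs hφ n a y hy] at key
  simpa [zshift, sub_add_cancel] using key

lemma codes_shift_minus (hs : shift '' X = X) (hφ : IsEndo X φ) {n : ℕ} {W : ℤ}
    (hc : Codes X (φ^[n]) (Set.Iic 0) (Set.Iic W)) (a : ℤ) :
    Codes X (φ^[n]) (Set.Iic a) (Set.Iic (W + a)) := by
  intro x hx y hy hagree j hj
  have hx' : zshift a x ∈ X := zshift_mem hs a hx
  have hy' : zshift a y ∈ X := zshift_mem hs a hy
  have key := hc _ hx' _ hy' (fun i hi => hagree (i + a) (by simp at hi ⊢; omega)) (j - a)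
    (by simp at hj ⊢; omega)
  rw [iter_zshift hs hφ n a x hx, iter_zshift hs hφ n a y hy] at key
  simpa [zshift, sub_add_cancel] using key

lemma exists_leftspecial (hX : IsSubshift X) (hinf : X.Infinite) (n : ℕ) :
    ∃ x ∈ X, ∃ y ∈ X, (∀ i : ℤ, 0 ≤ i → i < (n:ℤ) → x i = y i) ∧ x (-1) ≠ y (-1) := by
  by_contra hcon
  push_neg at hcon
  -- hcon : ∀ x ∈ X, ∀ y ∈ X, (∀ i, 0 ≤ i → i < n → x i = y i) → x (-1) = y (-1)
  have hshift : ∀ a : ℤ, ∀ x ∈ X, ∀ y ∈ X,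
      (∀ i : ℤ, a ≤ i → i < a + n → x i = y i) → x (a - 1) = y (a - 1) := by
    intro a x hx y hy hag
    have := hcon (zshift a x) (zshift_mem hX.2 a hx) (zshift a y) (zshift_mem hX.2 a hy)
      (fun i h0 hn => by
        show x (i + a) = y (i + a)
        exact hag (i + a) (by omega) (by omega))
    show x (a - 1) = y (a - 1)
    have h1 : zshift a x (-1) = x (a - 1) := by show x (-1 + a) = _; congr 1; ring
    have h2 : zshift a y (-1) = y (a - 1) := by show y (-1 + a) = _; congr 1; ring
    rw [h1, h2] at this; exact this
  have hleft : ∀ x ∈ X, ∀ y ∈ X, (∀ i : ℤ, 0 ≤ i → i < (n:ℤ) → x i = y i) →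
      ∀ j : ℤ, j < (n:ℤ) → x j = y j := by
    intro x hx y hy hag
    have main : ∀ k : ℕ, ∀ i : ℤ, -(k:ℤ) ≤ i → i < (n:ℤ) → x i = y i := by
      intro k
      induction k with
      | zero => intro i h1 h2; exact hag i (by omega) h2
      | succ k ih =>
        intro i h1 h2
        rcases lt_or_ge i (-(k:ℤ)) with h | h
        · have hieq : i = -(k:ℤ) - 1 := by omega
          rw [hieq]
          exact hshift (-(k:ℤ)) x hx y hy (fun i hi1 hi2 => ih i hi1 (by omega))
        · exact ih i h h2
    intro j hj
    exact main j.natAbs j (by omega) hj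
  -- languages
  set L : (m : ℕ) → Set (Fin m → A) :=
    fun m => {w | ∃ x ∈ X, ∀ i : Fin m, x ((i : ℕ) : ℤ) = w i} with hL
  have hshiftmem : ∀ x ∈ X, shift x ∈ X := by
    intro x hx; rw [← hX.2]; exact ⟨x, hx, rfl⟩
  -- drop-first map
  have Fmem : ∀ w ∈ L (n+1), (fun i : Fin n => w i.succ) ∈ L n := by
    rintro w ⟨x, hx, hw⟩
    refine ⟨shift x, hshiftmem x hx, fun i => ?_⟩
    show x (((i:ℕ):ℤ) + 1) = w i.succ
    rw [← hw i.succ]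
    congr 1
  have Gmem : ∀ w ∈ L (n+1), (fun i : Fin n => w i.castSucc) ∈ L n := by
    rintro w ⟨x, hx, hw⟩
    exact ⟨x, hx, fun i => by simpa using hw i.castSucc⟩
  let F : L (n+1) → L n := fun w => ⟨fun i => w.1 i.succ, Fmem w.1 w.2⟩
  let G : L (n+1) → L n := fun w => ⟨fun i => w.1 i.castSucc, Gmem w.1 w.2⟩
  have Fsurj : Function.Surjective F := by
    rintro ⟨w, x, hx, hw⟩
    have hx' : zshift (-1) x ∈ X := zshift_mem hX.2 (-1) hx
    refine ⟨⟨fun j : Fin (n+1) => zshift (-1) x ((j:ℕ):ℤ), ⟨_, hx', fun i => rfl⟩⟩, ?_⟩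
    apply Subtype.ext
    funext i
    show zshift (-1) x (((i.succ :Fin (n+1)):ℕ):ℤ) = w i
    rw [← hw i]
    show x ((((i:ℕ)+1 : ℕ):ℤ) + (-1)) = x ((i:ℕ):ℤ)
    congr 1
    push_cast
    ring
  have Gsurj : Function.Surjective G := by
    rintro ⟨w, x, hx, hw⟩
    refine ⟨⟨fun j : Fin (n+1) => x ((j:ℕ):ℤ), ⟨x, hx, fun i => rfl⟩⟩, ?_⟩
    apply Subtype.ext
    funext i
    show x (((i.castSucc : Fin (n+1)):ℕ):ℤ) = w i
    rw [← hw i]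
    simp
  have Finj : Function.Injective F := by
    rintro ⟨w, hwmem⟩ ⟨w', hw'mem⟩ heq
    obtain ⟨x, hx, hw⟩ := hwmem
    obtain ⟨y, hy, hw'⟩ := hw'mem
    have heq' : ∀ i : Fin n, w i.succ = w' i.succ := by
      intro i
      exact congrFun (congrArg Subtype.val heq) i
    have hag : ∀ i : ℤ, 0 ≤ i → i < (n:ℤ) → shift x i = shift y i := by
      intro i h0 hn
      set j : Fin n := ⟨i.toNat, by omega⟩ with hj
      have hcast : ((j.succ : Fin (n+1)) : ℕ) = i.toNat + 1 := rfl
      have h1 : shift x i = w j.succ := by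
        rw [← hw j.succ]
        show x (i + 1) = x (((j.succ : Fin (n+1)):ℕ):ℤ)
        congr 1
        rw [hcast]
        omega
      have h2 : shift y i = w' j.succ := by
        rw [← hw' j.succ]
        show y (i + 1) = y (((j.succ : Fin (n+1)):ℕ):ℤ)
        congr 1
        rw [hcast]
        omega
      rw [h1, h2, heq' j]
    have hm1 := hcon (shift x) (hshiftmem x hx) (shift y) (hshiftmem y hy) hag
    have h0 : w 0 = w' 0 := by
      rw [← hw 0, ← hw' 0]
      show x ((((0: Fin (n+1)):ℕ)):ℤ) = y _
      simpa [shift] using hm1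
    apply Subtype.ext
    funext j
    induction j using Fin.cases with
    | zero => exact h0
    | succ i => exact heq' i
  haveI : ∀ m : ℕ, Finite (L m) := fun m => Subtype.finite
  have hcard : Nat.card (L (n+1)) = Nat.card (L n) :=
    Nat.card_eq_of_bijective F ⟨Finj, Fsurj⟩
  have Ginj : Function.Injective G := by
    obtain ⟨e⟩ : Nonempty (L (n+1) ≃ L n) := Finite.card_eq.mp hcard
    have hGe : Function.Surjective (G ∘ e.symm) := Gsurj.comp e.symm.surjective
    have : Function.Injective (G ∘ e.symm) :=
      (Finite.injective_iff_surjective).2 hGe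
    have := this.comp e.injective
    simpa [Function.comp_def] using this
  have hright : ∀ x ∈ X, ∀ y ∈ X, (∀ i : ℤ, 0 ≤ i → i < (n:ℤ) → x i = y i) →
      x (n:ℤ) = y (n:ℤ) := by
    intro x hx y hy hag
    have hwmem : (fun j : Fin (n+1) => x ((j:ℕ):ℤ)) ∈ L (n+1) := ⟨x, hx, fun i => rfl⟩
    have hw'mem : (fun j : Fin (n+1) => y ((j:ℕ):ℤ)) ∈ L (n+1) := ⟨y, hy, fun i => rfl⟩
    have hGeq : G ⟨_, hwmem⟩ = G ⟨_, hw'mem⟩ := by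
      apply Subtype.ext
      funext i
      show x (((i.castSucc : Fin (n+1)):ℕ):ℤ) = y (((i.castSucc : Fin (n+1)):ℕ):ℤ)
      exact hag _ (by positivity) (by exact_mod_cast Int.ofNat_lt.mpr i.isLt)
    have := congrFun (congrArg Subtype.val (Ginj hGeq)) (Fin.last n)
    simpa using this
  refine absurd (Set.Finite.of_finite_image (f := fun x : ℤ → A => fun j : Fin n => x ((j:ℕ):ℤ))
    (Set.toFinite _) ?_) hinf
  intro x hx y hy hfeq
    -- injOn of restriction to window
  have hag : ∀ i : ℤ, 0 ≤ i → i < (n:ℤ) → x i = y i := by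
    intro i h0 hn
    set j : Fin n := ⟨i.toNat, by omega⟩
    have h5 := congrFun hfeq j
    simp only at h5
    have hji : ((j:ℕ):ℤ) = i := by simp [j]; omega
    rw [← hji]; exact h5
  -- full determination
  have hrightshift : ∀ a : ℤ, (∀ i : ℤ, a ≤ i → i < a + n → x i = y i) →
      x (a + n) = y (a + n) := by
    intro a hag'
    have := hright (zshift a x) (zshift_mem hX.2 a hx) (zshift a y) (zshift_mem hX.2 a hy)
      (fun i h0 hn => by
        show x (i + a) = y (i + a)
        exact hag' (i + a) (by omega) (by omega))
    show x (a + n) = y (a + n)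
    have h1 : zshift a x (n:ℤ) = x (a + n) := by show x ((n:ℤ) + a) = _; congr 1; ring
    have h2 : zshift a y (n:ℤ) = y (a + n) := by show y ((n:ℤ) + a) = _; congr 1; ring
    rw [h1, h2] at this; exact this
  have hup : ∀ k : ℕ, ∀ i : ℤ, 0 ≤ i → i < (n:ℤ) + k → x i = y i := by
    intro k
    induction k with
    | zero => intro i h1 h2; exact hag i h1 (by omega)
    | succ k ih =>
      intro i h1 h2
      rcases lt_or_ge i ((n:ℤ) + k) with h | h
      · exact ih i h1 h
      · have hieq : i = (k:ℤ) + n := by omega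
        rw [hieq]
        exact hrightshift (k:ℤ) (fun i hi1 hi2 => ih i (by omega) (by omega))
  funext j
  rcases lt_or_ge j (n:ℤ) with h | h
  · exact hleft x hx y hy hag j h
  · exact hup ((j - n).toNat + 1) j (by omega) (by omega)

lemma exists_pair_plus (hX : IsSubshift X) (hinf : X.Infinite) :
    ∃ x ∈ X, ∃ y ∈ X, (∀ i : ℤ, 0 ≤ i → x i = y i) ∧ x (-1) ≠ y (-1) := by
  have hch : ∀ n : ℕ, ∃ p : (ℤ → A) × (ℤ → A), p.1 ∈ X ∧ p.2 ∈ X ∧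
      (∀ i : ℤ, 0 ≤ i → i < (n:ℤ) → p.1 i = p.2 i) ∧ p.1 (-1) ≠ p.2 (-1) := by
    intro n
    obtain ⟨x, hx, y, hy, hagree, hne⟩ := exists_leftspecial hX hinf n
    exact ⟨(x, y), hx, hy, hagree, hne⟩
  choose u hu1 hu2 hu3 hu4 using hch
  haveI : CompactSpace (ℤ → A) := by infer_instance
  have hcomp : IsCompact (X ×ˢ X) := (hX.1.isCompact).prod (hX.1.isCompact)
  obtain ⟨⟨a, b⟩, hab, σ, hσ, htend⟩ := hcomp.tendsto_subseq (x := u) (fun n => ⟨hu1 n, hu2 n⟩)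
  have ha : a ∈ X := hab.1
  have hb : b ∈ X := hab.2
  have htend1 : ∀ i : ℤ, ∀ᶠ k in atTop, (u (σ k)).1 i = a i := by
    intro i
    have h1 : Tendsto (fun k => (u (σ k)).1 i) atTop (𝓝 (a i)) :=
      ((continuous_apply i).tendsto a).comp ((continuous_fst.tendsto (a,b)).comp htend)
    rwa [nhds_discrete, tendsto_pure] at h1
  have htend2 : ∀ i : ℤ, ∀ᶠ k in atTop, (u (σ k)).2 i = b i := by
    intro i
    have h1 : Tendsto (fun k => (u (σ k)).2 i) atTop (𝓝 (b i)) :=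
      ((continuous_apply i).tendsto b).comp ((continuous_snd.tendsto (a,b)).comp htend)
    rwa [nhds_discrete, tendsto_pure] at h1
  refine ⟨a, ha, b, hb, ?_, ?_⟩
  · intro i hi
    have hev : ∀ᶠ k in atTop, (u (σ k)).1 i = a i ∧ (u (σ k)).2 i = b i ∧ (i:ℤ) < (σ k : ℤ) :=
      (htend1 i).and ((htend2 i).and (by
        have : Tendsto (fun k => (σ k : ℤ)) atTop atTop :=
          tendsto_natCast_atTop_atTop.comp hσ.tendsto_atTop
        exact this.eventually_gt_atTop i))
    obtain ⟨k, h1, h2, h3⟩ := hev.exists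
    rw [← h1, ← h2]
    exact hu3 (σ k) i hi (by exact_mod_cast h3)
  · obtain ⟨k, h1, h2⟩ := ((htend1 (-1)).and (htend2 (-1))).exists
    rw [← h1, ← h2]
    exact hu4 (σ k)

def mirror {A : Type*} (x : ℤ → A) : ℤ → A := fun m => x (-m)

lemma mirror_mirror (x : ℤ → A) : mirror (mirror x) = x := by
  funext m; simp [mirror]

lemma exists_pair_minus (hX : IsSubshift X) (hinf : X.Infinite) :
    ∃ x ∈ X, ∃ y ∈ X, (∀ i : ℤ, i ≤ 0 → x i = y i) ∧ x 1 ≠ y 1 := by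
  set X' : Set (ℤ → A) := mirror '' X with hX'
  have himg : X' = mirror ⁻¹' X := by
    ext z
    constructor
    · rintro ⟨x, hx, rfl⟩; simpa [Set.mem_preimage, mirror_mirror] using hx
    · intro hz; exact ⟨mirror z, hz, mirror_mirror z⟩
  have hXc : IsSubshift X' := by
    constructor
    · rw [himg]
      exact IsClosed.preimage (continuous_pi fun i => continuous_apply (-i)) hX.1
    · ext z
      constructor
      · rintro ⟨-, ⟨x, hx, rfl⟩, rfl⟩
        have : shift (mirror x) = mirror (zshift (-1) x) := by
          funext m; show x (-(m+1)) = x (-m + -1); congr 1; ring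
        rw [this]
        exact ⟨zshift (-1) x, zshift_mem hX.2 (-1) hx, rfl⟩
      · rintro ⟨x, hx, rfl⟩
        refine ⟨mirror (zshift 1 x), ⟨zshift 1 x, zshift_mem hX.2 1 hx, rfl⟩, ?_⟩
        funext m; show zshift 1 x (-(m+1)) = x (-m)
        show x (-(m+1) + 1) = x (-m); congr 1; ring
  have hinf' : X'.Infinite := hinf.image (Function.Involutive.injective mirror_mirror).injOn
  obtain ⟨x', hx', y', hy', hagree, hne⟩ := exists_pair_plus hXc hinf'
  have hmem : ∀ z ∈ X', mirror z ∈ X := by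
    rintro z ⟨x, hx, rfl⟩; rwa [mirror_mirror]
  refine ⟨mirror x', hmem x' hx', mirror y', hmem y' hy', ?_, ?_⟩
  · intro i hi
    exact hagree (-i) (by omega)
  · show x' (-1) ≠ y' (-1)
    exact hne

end AlphaCompositionAux

/-- For commuting endomorphisms: `α⁺(φψ) ≤ α⁺(φ) + α⁺(ψ)` and
`α⁻(φψ) ≥ α⁻(φ) + α⁻(ψ)`; in particular, if `ψ` is inverse to `φ`, then
`α⁺(φ) + α⁺(φ⁻¹) ≥ 0` and `α⁻(φ) + α⁻(φ⁻¹) ≤ 0`. -/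
theorem alpha_composition {A : Type*} [Fintype A] [TopologicalSpace A]
    [DiscreteTopology A] (X : Set (ℤ → A)) (hX : IsSubshift X) (hinf : X.Infinite)
    (φ ψ : (ℤ → A) → (ℤ → A)) (hφ : IsEndo X φ) (hψ : IsEndo X ψ)
    (hcomm : ∀ x ∈ X, φ (ψ x) = ψ (φ x))
    (Wp₁ Wm₁ Wp₂ Wm₂ Wp₃ Wm₃ : ℕ → ℤ)
    (hWp₁ : ∀ n, IsLeast (WplusSet X φ n) (Wp₁ n))
    (hWm₁ : ∀ n, IsGreatest (WminusSet X φ n) (Wm₁ n))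
    (hWp₂ : ∀ n, IsLeast (WplusSet X ψ n) (Wp₂ n))
    (hWm₂ : ∀ n, IsGreatest (WminusSet X ψ n) (Wm₂ n))
    (hWp₃ : ∀ n, IsLeast (WplusSet X (φ ∘ ψ) n) (Wp₃ n))
    (hWm₃ : ∀ n, IsGreatest (WminusSet X (φ ∘ ψ) n) (Wm₃ n))
    (αp₁ αm₁ αp₂ αm₂ αp₃ αm₃ : ℝ)
    (hαp₁ : Tendsto (fun n : ℕ => (Wp₁ n : ℝ) / n) atTop (𝓝 αp₁))
    (hαm₁ : Tendsto (fun n : ℕ => (Wm₁ n : ℝ) / n) atTop (𝓝 αm₁))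
    (hαp₂ : Tendsto (fun n : ℕ => (Wp₂ n : ℝ) / n) atTop (𝓝 αp₂))
    (hαm₂ : Tendsto (fun n : ℕ => (Wm₂ n : ℝ) / n) atTop (𝓝 αm₂))
    (hαp₃ : Tendsto (fun n : ℕ => (Wp₃ n : ℝ) / n) atTop (𝓝 αp₃))
    (hαm₃ : Tendsto (fun n : ℕ => (Wm₃ n : ℝ) / n) atTop (𝓝 αm₃)) :
    (αp₃ ≤ αp₁ + αp₂ ∧ αm₁ + αm₂ ≤ αm₃) ∧
    ((∀ x ∈ X, ψ (φ x) = x) → (0 ≤ αp₁ + αp₂ ∧ αm₁ + αm₂ ≤ 0)) := by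
  have hs := hX.2
  -- part 1: composition memberships
  have hmem_p : ∀ n, Wp₁ n + Wp₂ n ∈ WplusSet X (φ ∘ ψ) n := by
    intro n x hx y hy hag j hj
    have h2 := (hWp₂ n).1 x hx y hy hag
    have h1 := codes_shift_plus hs hφ (hWp₁ n).1 (Wp₂ n) (ψ^[n] x) (iter_mem hψ n hx)
      (ψ^[n] y) (iter_mem hψ n hy) h2 j hj
    rw [comp_iter hφ hψ hcomm n x hx, comp_iter hφ hψ hcomm n y hy]
    exact h1
  have hmem_m : ∀ n, Wm₁ n + Wm₂ n ∈ WminusSet X (φ ∘ ψ) n := by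
    intro n x hx y hy hag j hj
    have h2 := (hWm₂ n).1 x hx y hy hag
    have h1 := codes_shift_minus hs hφ (hWm₁ n).1 (Wm₂ n) (ψ^[n] x) (iter_mem hψ n hx)
      (ψ^[n] y) (iter_mem hψ n hy) h2 j hj
    rw [comp_iter hφ hψ hcomm n x hx, comp_iter hφ hψ hcomm n y hy]
    exact h1
  have hle_p : ∀ n, Wp₃ n ≤ Wp₁ n + Wp₂ n := fun n => (hWp₃ n).2 (hmem_p n)
  have hge_m : ∀ n, Wm₁ n + Wm₂ n ≤ Wm₃ n := fun n => (hWm₃ n).2 (hmem_m n)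
  have key1 : αp₃ ≤ αp₁ + αp₂ := by
    apply le_of_tendsto_of_tendsto' hαp₃ (hαp₁.add hαp₂)
    intro n
    rw [← add_div]
    have hcast : ((Wp₃ n : ℝ)) ≤ (Wp₁ n : ℝ) + (Wp₂ n : ℝ) := by exact_mod_cast hle_p n
    gcongr
  have key2 : αm₁ + αm₂ ≤ αm₃ := by
    apply le_of_tendsto_of_tendsto' (hαm₁.add hαm₂) hαm₃
    intro n
    rw [← add_div]
    have hcast : ((Wm₁ n : ℝ)) + (Wm₂ n : ℝ) ≤ (Wm₃ n : ℝ) := by exact_mod_cast hge_m n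
    gcongr
  refine ⟨⟨key1, key2⟩, fun hinv => ?_⟩
  have hfix : ∀ x ∈ X, (φ ∘ ψ) x = x := fun x hx => by
    show φ (ψ x) = x; rw [hcomm x hx, hinv x hx]
  have hid : ∀ n, ∀ x ∈ X, (φ ∘ ψ)^[n] x = x := by
    intro n
    induction n with
    | zero => intro x hx; simp
    | succ n ih => intro x hx; rw [Function.iterate_succ_apply, hfix x hx, ih x hx]
  have hWp3 : ∀ n, 0 ≤ Wp₃ n := by
    intro n
    by_contra hneg
    push_neg at hneg
    obtain ⟨x, hx, y, hy, hag, hne⟩ := exists_pair_plus hX hinf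
    have := (hWp₃ n).1 x hx y hy (fun i hi => hag i hi) (-1) (by simp; omega)
    rw [hid n x hx, hid n y hy] at this
    exact hne this
  have hWm3 : ∀ n, Wm₃ n ≤ 0 := by
    intro n
    by_contra hneg
    push_neg at hneg
    obtain ⟨x, hx, y, hy, hag, hne⟩ := exists_pair_minus hX hinf
    have := (hWm₃ n).1 x hx y hy (fun i hi => hag i hi) 1 (by simp; omega)
    rw [hid n x hx, hid n y hy] at this
    exact hne this
  have hp3 : (0:ℝ) ≤ αp₃ :=
    ge_of_tendsto' hαp₃ (fun n => div_nonneg (by exact_mod_cast hWp3 n) (Nat.cast_nonneg n))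
  have hm3 : αm₃ ≤ (0:ℝ) :=
    le_of_tendsto' hαm₃ (fun n =>
      div_nonpos_iff.mpr (Or.inr ⟨by exact_mod_cast hWm3 n, Nat.cast_nonneg n⟩))
  exact ⟨le_trans hp3 key1, le_trans key2 hm3⟩
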